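/- The join operation on normalized cubical chains of the n-cube is anti-associative: for faces x, y, z of I^n (encoded as length-n strings in {0,1,I}), one has (x * y) * z = (−1)^{|x|+1} x * (y * z), where |x| is the number of I's in x. -/

import Mathlib

/-- The three possible entries of a face of the cube `Iⁿ`: `0`, `1`, or the free
coordinate `I`. -/
inductive CubeSym : Type
  | zero : CubeSym
  | one : CubeSym
  | seg : CubeSym
deriving DecidableEq

/-- Normalized cubical chains on the `n`-cube: the free abelian group on faces, a face
being encoded as a length-`n` string in `{0, 1, I}`. -/
abbrev CubeChains (n : ℕ) : Type := (Fin n → CubeSym) →₀ ℤ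

/-- The degree (dimension) of a face: the number of `I`'s. -/
def faceDeg {n : ℕ} (x : Fin n → CubeSym) : ℕ :=
  (Finset.univ.filter fun i => x i = CubeSym.seg).card

/-- The join on the `1`-cube: `0 * 1 = I`, `1 * 0 = −I`, all other joins of vertices `0`. -/
def joinCoeff : CubeSym → CubeSym → ℤ
  | CubeSym.zero, CubeSym.one => 1
  | CubeSym.one, CubeSym.zero => -1
  | _, _ => 0

/-- The face `x_{<i} I y_{>i}`. -/
def spliceFace {n : ℕ} (x y : Fin n → CubeSym) (i : Fin n) : Fin n → CubeSym :=
  fun j => if j < i then x j else if j = i then CubeSym.seg else y j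

/-- The join of two faces:
`(x_1…x_n) * (y_1…y_n) = (−1)^{|x|} ∑_i ε(y_{<i}) ε(x_{>i}) x_{<i} (x_i * y_i) y_{>i}`,
where `ε` is the augmentation (vanishing on strings containing `I`). -/
noncomputable def joinFace {n : ℕ} (x y : Fin n → CubeSym) : CubeChains n :=
  ∑ i : Fin n,
    if (∀ j : Fin n, j < i → y j ≠ CubeSym.seg) ∧ (∀ j : Fin n, i < j → x j ≠ CubeSym.seg) then
      ((-1 : ℤ) ^ faceDeg x * joinCoeff (x i) (y i)) • Finsupp.single (spliceFace x y i) (1 : ℤ)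
    else 0

/-- Bilinear extension of the join: join of a chain with a face. -/
noncomputable def joinCF {n : ℕ} (c : CubeChains n) (z : Fin n → CubeSym) : CubeChains n :=
  c.sum fun x a => a • joinFace x z

/-- Bilinear extension of the join: join of a face with a chain. -/
noncomputable def joinFC {n : ℕ} (x : Fin n → CubeSym) (c : CubeChains n) : CubeChains n :=
  c.sum fun y b => b • joinFace x y

-- auxiliary lemmas
lemma joinCF_zero {n : ℕ} (z : Fin n → CubeSym) : joinCF 0 z = 0 :=
  Finsupp.sum_zero_index

lemma joinCF_add {n : ℕ} (c d : CubeChains n) (z : Fin n → CubeSym) :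
    joinCF (c + d) z = joinCF c z + joinCF d z :=
  Finsupp.sum_add_index' (fun _ => zero_smul _ _) (fun _ a b => add_smul a b _)

lemma joinCF_sum {n : ℕ} {ι : Type*} (s : Finset ι) (t : ι → CubeChains n)
    (z : Fin n → CubeSym) :
    joinCF (∑ i ∈ s, t i) z = ∑ i ∈ s, joinCF (t i) z := by
  classical
  induction s using Finset.induction_on with
  | empty => simp [joinCF_zero]
  | insert _ _ h ih => rw [Finset.sum_insert h, Finset.sum_insert h, joinCF_add, ih]

lemma joinCF_smul_single {n : ℕ} (a : ℤ) (w z : Fin n → CubeSym) :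
    joinCF (a • Finsupp.single w (1 : ℤ)) z = a • joinFace w z := by
  rw [show (a • Finsupp.single w (1:ℤ) : CubeChains n) = Finsupp.single w a by
    rw [Finsupp.smul_single, smul_eq_mul, mul_one]]
  exact Finsupp.sum_single_index (zero_smul _ _)

lemma joinFC_zero {n : ℕ} (x : Fin n → CubeSym) : joinFC x 0 = 0 :=
  Finsupp.sum_zero_index

lemma joinFC_add {n : ℕ} (x : Fin n → CubeSym) (c d : CubeChains n) :
    joinFC x (c + d) = joinFC x c + joinFC x d :=
  Finsupp.sum_add_index' (fun _ => zero_smul _ _) (fun _ a b => add_smul a b _)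

lemma joinFC_sum {n : ℕ} {ι : Type*} (x : Fin n → CubeSym) (s : Finset ι)
    (t : ι → CubeChains n) :
    joinFC x (∑ i ∈ s, t i) = ∑ i ∈ s, joinFC x (t i) := by
  classical
  induction s using Finset.induction_on with
  | empty => simp [joinFC_zero]
  | insert _ _ h ih => rw [Finset.sum_insert h, Finset.sum_insert h, joinFC_add, ih]

lemma joinFC_smul_single {n : ℕ} (x : Fin n → CubeSym) (a : ℤ) (w : Fin n → CubeSym) :
    joinFC x (a • Finsupp.single w (1 : ℤ)) = a • joinFace x w := by
  rw [show (a • Finsupp.single w (1:ℤ) : CubeChains n) = Finsupp.single w a by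
    rw [Finsupp.smul_single, smul_eq_mul, mul_one]]
  exact Finsupp.sum_single_index (zero_smul _ _)

lemma joinCoeff_seg_left (b : CubeSym) : joinCoeff CubeSym.seg b = 0 := by
  cases b <;> rfl

lemma joinCoeff_seg_right (a : CubeSym) : joinCoeff a CubeSym.seg = 0 := by
  cases a <;> rfl

lemma joinCoeff_ne_zero {a b : CubeSym} (h : joinCoeff a b ≠ 0) :
    a ≠ CubeSym.seg ∧ b ≠ CubeSym.seg := by
  cases a <;> cases b <;> simp_all [joinCoeff]

lemma spliceFace_self {n : ℕ} (x y : Fin n → CubeSym) (i : Fin n) :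
    spliceFace x y i i = CubeSym.seg := by
  simp [spliceFace]

lemma spliceFace_lt {n : ℕ} (x y : Fin n → CubeSym) {i j : Fin n} (h : j < i) :
    spliceFace x y i j = x j := by
  simp [spliceFace, h]

lemma spliceFace_gt {n : ℕ} (x y : Fin n → CubeSym) {i j : Fin n} (h : i < j) :
    spliceFace x y i j = y j := by
  simp [spliceFace, not_lt_of_gt h, Fin.ne_of_gt h]

lemma spliceFace_assoc {n : ℕ} (x y z : Fin n → CubeSym) {i j : Fin n} (h : i < j) :
    spliceFace (spliceFace x y i) z j = spliceFace x (spliceFace y z j) i := by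
  funext k
  simp only [spliceFace]
  rcases lt_trichotomy k i with hk | hk | hk
  · simp [hk, lt_trans hk h, Fin.ne_of_lt (lt_trans hk h)]
  · subst hk
    simp [h, Fin.ne_of_lt h]
  · simp [not_lt_of_gt hk, Fin.ne_of_gt hk]

lemma faceDeg_spliceFace {n : ℕ} {x y : Fin n → CubeSym} {i : Fin n}
    (hx : ∀ k, i < k → x k ≠ CubeSym.seg) (hxi : x i ≠ CubeSym.seg)
    (hy : ∀ k, k < i → y k ≠ CubeSym.seg) (hyi : y i ≠ CubeSym.seg) :
    faceDeg (spliceFace x y i) = faceDeg x + faceDeg y + 1 := by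
  classical
  unfold faceDeg
  have hset : (Finset.univ.filter fun k => spliceFace x y i k = CubeSym.seg)
      = ((Finset.univ.filter fun k => x k = CubeSym.seg)
        ∪ (Finset.univ.filter fun k => y k = CubeSym.seg)) ∪ {i} := by
    ext k
    simp only [Finset.mem_filter, Finset.mem_union, Finset.mem_singleton, Finset.mem_univ,
      true_and]
    simp only [spliceFace]
    rcases lt_trichotomy k i with hk | hk | hk
    · simp only [if_pos hk]
      constructor
      · intro hxk; exact Or.inl (Or.inl hxk)
      · rintro ((hxk | hyk) | rfl)
        · exact hxk
        · exact absurd hyk (hy k hk)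
        · exact absurd hk (lt_irrefl _)
    · subst hk
      simp [hxi, hyi]
    · simp only [if_neg (not_lt_of_gt hk), if_neg (Fin.ne_of_gt hk)]
      constructor
      · intro hyk; exact Or.inl (Or.inr hyk)
      · rintro ((hxk | hyk) | rfl)
        · exact absurd hxk (hx k hk)
        · exact hyk
        · exact absurd hk (lt_irrefl _)
  rw [hset]
  have hdisj1 : Disjoint (Finset.univ.filter fun k => x k = CubeSym.seg)
      (Finset.univ.filter fun k => y k = CubeSym.seg) := by
    rw [Finset.disjoint_left]
    intro k hk hk'
    simp only [Finset.mem_filter, Finset.mem_univ, true_and] at hk hk'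
    rcases lt_trichotomy k i with h | h | h
    · exact hy k h hk'
    · exact hxi (h ▸ hk)
    · exact hx k h hk
  have hdisj2 : Disjoint ((Finset.univ.filter fun k => x k = CubeSym.seg)
      ∪ (Finset.univ.filter fun k => y k = CubeSym.seg)) ({i} : Finset (Fin n)) := by
    rw [Finset.disjoint_right]
    intro k hk hk'
    simp only [Finset.mem_singleton] at hk
    subst hk
    simp only [Finset.mem_union, Finset.mem_filter, Finset.mem_univ, true_and] at hk'
    rcases hk' with h | h
    · exact hxi h
    · exact hyi h
  rw [Finset.card_union_of_disjoint hdisj2, Finset.card_union_of_disjoint hdisj1,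
    Finset.card_singleton]

lemma join_key {n : ℕ} (x y z : Fin n → CubeSym) (i j : Fin n) :
    (if (∀ k : Fin n, k < i → y k ≠ CubeSym.seg) ∧ (∀ k : Fin n, i < k → x k ≠ CubeSym.seg) then
      ((-1:ℤ) ^ faceDeg x * joinCoeff (x i) (y i)) •
        (if (∀ k : Fin n, k < j → z k ≠ CubeSym.seg) ∧
            (∀ k : Fin n, j < k → spliceFace x y i k ≠ CubeSym.seg) then
          ((-1:ℤ) ^ faceDeg (spliceFace x y i) * joinCoeff (spliceFace x y i j) (z j)) •
            Finsupp.single (spliceFace (spliceFace x y i) z j) (1:ℤ)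
        else 0)
    else 0)
    = ((-1:ℤ) ^ (faceDeg x + 1)) •
      (if (∀ k : Fin n, k < j → z k ≠ CubeSym.seg) ∧ (∀ k : Fin n, j < k → y k ≠ CubeSym.seg) then
        ((-1:ℤ) ^ faceDeg y * joinCoeff (y j) (z j)) •
          (if (∀ k : Fin n, k < i → spliceFace y z j k ≠ CubeSym.seg) ∧
              (∀ k : Fin n, i < k → x k ≠ CubeSym.seg) then
            ((-1:ℤ) ^ faceDeg x * joinCoeff (x i) (spliceFace y z j i)) •
              Finsupp.single (spliceFace x (spliceFace y z j) i) (1:ℤ)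
          else 0)
      else 0) := by
  rcases lt_trichotomy i j with h | h | h
  · -- i < j
    have e1 : ((∀ k : Fin n, k < j → z k ≠ CubeSym.seg) ∧
        (∀ k : Fin n, j < k → spliceFace x y i k ≠ CubeSym.seg)) ↔
        ((∀ k : Fin n, k < j → z k ≠ CubeSym.seg) ∧ (∀ k : Fin n, j < k → y k ≠ CubeSym.seg)) := by
      refine and_congr_right fun _ => forall_congr' fun k => ?_
      constructor <;> intro hh hk
      · rw [← spliceFace_gt x y (h.trans hk)]; exact hh hk
      · rw [spliceFace_gt x y (h.trans hk)]; exact hh hk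
    have e2 : ((∀ k : Fin n, k < i → spliceFace y z j k ≠ CubeSym.seg) ∧
        (∀ k : Fin n, i < k → x k ≠ CubeSym.seg)) ↔
        ((∀ k : Fin n, k < i → y k ≠ CubeSym.seg) ∧ (∀ k : Fin n, i < k → x k ≠ CubeSym.seg)) := by
      refine and_congr_left fun _ => forall_congr' fun k => ?_
      constructor <;> intro hh hk
      · rw [← spliceFace_lt y z (hk.trans h)]; exact hh hk
      · rw [spliceFace_lt y z (hk.trans h)]; exact hh hk
    rw [spliceFace_gt x y h, spliceFace_lt y z h, spliceFace_assoc x y z h]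
    simp only [e1, e2]
    by_cases hP : (∀ k : Fin n, k < i → y k ≠ CubeSym.seg) ∧ (∀ k : Fin n, i < k → x k ≠ CubeSym.seg)
    · by_cases hQ : (∀ k : Fin n, k < j → z k ≠ CubeSym.seg) ∧ (∀ k : Fin n, j < k → y k ≠ CubeSym.seg)
      · rw [if_pos hP, if_pos hQ, if_pos hQ, if_pos hP, smul_smul, smul_smul, smul_smul]
        congr 1
        by_cases hc1 : joinCoeff (x i) (y i) = 0
        · rw [hc1]; ring
        by_cases hc2 : joinCoeff (y j) (z j) = 0
        · rw [hc2]; ring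
        obtain ⟨hxi, hyi⟩ := joinCoeff_ne_zero hc1
        have hdeg : faceDeg (spliceFace x y i) = faceDeg x + faceDeg y + 1 :=
          faceDeg_spliceFace hP.2 hxi hP.1 hyi
        rw [hdeg]; ring
      · rw [if_neg hQ, if_neg hQ]; simp [hP]
    · rw [if_neg hP]
      by_cases hQ : (∀ k : Fin n, k < j → z k ≠ CubeSym.seg) ∧ (∀ k : Fin n, j < k → y k ≠ CubeSym.seg)
      · rw [if_pos hQ, if_neg hP]; simp
      · rw [if_neg hQ]; simp
  · -- i = j
    subst h
    simp [spliceFace_self, joinCoeff_seg_left, joinCoeff_seg_right]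
  · -- j < i
    have hC2 : ¬ ((∀ k : Fin n, k < j → z k ≠ CubeSym.seg) ∧
        (∀ k : Fin n, j < k → spliceFace x y i k ≠ CubeSym.seg)) := by
      rintro ⟨-, h2⟩
      exact h2 i h (spliceFace_self x y i)
    have hD2 : ¬ ((∀ k : Fin n, k < i → spliceFace y z j k ≠ CubeSym.seg) ∧
        (∀ k : Fin n, i < k → x k ≠ CubeSym.seg)) := by
      rintro ⟨h1, -⟩
      exact h1 j h (spliceFace_self y z j)
    simp [hC2, hD2]

/-- The join operation on normalized cubical chains of the `n`-cube is
anti-associative: `(x * y) * z = (−1)^{|x|+1} x * (y * z)` for all faces `x, y, z`. -/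
theorem join_antiassoc {n : ℕ} (x y z : Fin n → CubeSym) :
    joinCF (joinFace x y) z = ((-1 : ℤ) ^ (faceDeg x + 1)) • joinFC x (joinFace y z) := by
  classical
  calc joinCF (joinFace x y) z
      = ∑ i : Fin n, joinCF
          (if (∀ k : Fin n, k < i → y k ≠ CubeSym.seg) ∧
              (∀ k : Fin n, i < k → x k ≠ CubeSym.seg) then
            ((-1:ℤ) ^ faceDeg x * joinCoeff (x i) (y i)) •
              Finsupp.single (spliceFace x y i) (1:ℤ)
          else 0) z := by
        rw [joinFace, joinCF_sum]
    _ = ∑ i : Fin n, ∑ j : Fin n,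
          (if (∀ k : Fin n, k < i → y k ≠ CubeSym.seg) ∧
              (∀ k : Fin n, i < k → x k ≠ CubeSym.seg) then
            ((-1:ℤ) ^ faceDeg x * joinCoeff (x i) (y i)) •
              (if (∀ k : Fin n, k < j → z k ≠ CubeSym.seg) ∧
                  (∀ k : Fin n, j < k → spliceFace x y i k ≠ CubeSym.seg) then
                ((-1:ℤ) ^ faceDeg (spliceFace x y i) * joinCoeff (spliceFace x y i j) (z j)) •
                  Finsupp.single (spliceFace (spliceFace x y i) z j) (1:ℤ)
              else 0)
          else 0) := by
        refine Finset.sum_congr rfl fun i _ => ?_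
        by_cases hP : (∀ k : Fin n, k < i → y k ≠ CubeSym.seg) ∧
            (∀ k : Fin n, i < k → x k ≠ CubeSym.seg)
        · rw [if_pos hP, joinCF_smul_single, joinFace, Finset.smul_sum]
          exact Finset.sum_congr rfl fun j _ => by rw [if_pos hP]
        · rw [if_neg hP, joinCF_zero]
          simp [if_neg hP]
    _ = ∑ i : Fin n, ∑ j : Fin n, ((-1:ℤ) ^ (faceDeg x + 1)) •
          (if (∀ k : Fin n, k < j → z k ≠ CubeSym.seg) ∧
              (∀ k : Fin n, j < k → y k ≠ CubeSym.seg) then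
            ((-1:ℤ) ^ faceDeg y * joinCoeff (y j) (z j)) •
              (if (∀ k : Fin n, k < i → spliceFace y z j k ≠ CubeSym.seg) ∧
                  (∀ k : Fin n, i < k → x k ≠ CubeSym.seg) then
                ((-1:ℤ) ^ faceDeg x * joinCoeff (x i) (spliceFace y z j i)) •
                  Finsupp.single (spliceFace x (spliceFace y z j) i) (1:ℤ)
              else 0)
          else 0) :=
        Finset.sum_congr rfl fun i _ => Finset.sum_congr rfl fun j _ => join_key x y z i j
    _ = ∑ j : Fin n, ∑ i : Fin n, ((-1:ℤ) ^ (faceDeg x + 1)) •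
          (if (∀ k : Fin n, k < j → z k ≠ CubeSym.seg) ∧
              (∀ k : Fin n, j < k → y k ≠ CubeSym.seg) then
            ((-1:ℤ) ^ faceDeg y * joinCoeff (y j) (z j)) •
              (if (∀ k : Fin n, k < i → spliceFace y z j k ≠ CubeSym.seg) ∧
                  (∀ k : Fin n, i < k → x k ≠ CubeSym.seg) then
                ((-1:ℤ) ^ faceDeg x * joinCoeff (x i) (spliceFace y z j i)) •
                  Finsupp.single (spliceFace x (spliceFace y z j) i) (1:ℤ)
              else 0)
          else 0) := Finset.sum_comm
    _ = ((-1 : ℤ) ^ (faceDeg x + 1)) • joinFC x (joinFace y z) := by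
        conv_rhs => rw [joinFace, joinFC_sum, Finset.smul_sum]
        refine Finset.sum_congr rfl fun j _ => ?_
        by_cases hQ : (∀ k : Fin n, k < j → z k ≠ CubeSym.seg) ∧
            (∀ k : Fin n, j < k → y k ≠ CubeSym.seg)
        · rw [if_pos hQ, joinFC_smul_single, joinFace, Finset.smul_sum, Finset.smul_sum]
          exact Finset.sum_congr rfl fun i _ => by rw [if_pos hQ]
        · rw [if_neg hQ, joinFC_zero, smul_zero]
          simp [if_neg hQ]
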